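/- Let G = GL_d(ℂ), let S ⊂ G be a compact set, and define the joint spectral radius R(S) = lim_n sup_{g∈Sⁿ}‖g‖^{1/n} and the joint spectrum J(S) as the Hausdorff limit of (1/n)κ(Sⁿ) (assumed to exist). Then log R(S) = max{x₁ : (x₁,…,x_d) ∈ J(S)} and log R_sub(S) = min{x₁ : (x₁,…,x_d) ∈ J(S)}, where R_sub(S) = lim_n min_{g∈Sⁿ}‖g‖^{1/n}. -/

import Mathlib

open Matrix Pointwise

/-- Logarithms of moduli of complex eigenvalues, sorted in decreasing order. -/
noncomputable def lambdaVec {d : ℕ} (g : Matrix (Fin d) (Fin d) ℂ) : Fin d → ℝ :=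
  fun i => ((g.charpoly.roots.map (fun z => Real.log ‖z‖)).sort (· ≤ ·)).reverse.getD i 0

/-- The Cartan projection `κ(g)`: logarithms of singular values in decreasing order,
as a point of Euclidean space `ℝ^d`. -/
noncomputable def kappaE {d : ℕ} (g : Matrix (Fin d) (Fin d) ℂ) : EuclideanSpace ℝ (Fin d) :=
  (WithLp.equiv 2 (Fin d → ℝ)).symm (fun i => (1 / 2 : ℝ) * lambdaVec (gᴴ * g) i)

/-- The operator (Euclidean) norm of a complex matrix. -/
noncomputable def opNormC {d : ℕ} (g : Matrix (Fin d) (Fin d) ℂ) : ℝ :=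
  ‖Matrix.toEuclideanCLM (𝕜 := ℂ) g‖

/-- The first coordinate `x₁` of a point of the Weyl chamber of `GL_d(ℂ)`. -/
noncomputable def firstCoord {d : ℕ} [NeZero d] (x : EuclideanSpace ℝ (Fin d)) : ℝ :=
  (WithLp.equiv 2 (Fin d → ℝ)) x 0


open Polynomial
open scoped ComplexOrder

variable {n : Type*} [DecidableEq n] [Fintype n] {R : Type*} [CommRing R]

lemma charpoly_conj_unit (U W A : Matrix n n R) (h1 : U * W = 1) (h2 : W * U = 1) :
    (U * A * W).charpoly = A.charpoly := by
  have hC : ∀ M N : Matrix n n R, ((C : R →+* R[X]).mapMatrix (M * N)) =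
      (C : R →+* R[X]).mapMatrix M * (C : R →+* R[X]).mapMatrix N := fun M N => by
    simp [_root_.map_mul]
  have key : charmatrix (U * A * W) =
      (C : R →+* R[X]).mapMatrix U * charmatrix A * (C : R →+* R[X]).mapMatrix W := by
    rw [charmatrix, charmatrix]
    rw [mul_sub, sub_mul]
    congr 1
    · have hcomm := (scalar_commute (X : R[X]) (fun r' => Commute.all _ _)
        ((C : R →+* R[X]).mapMatrix W)).symm
      calc Matrix.scalar n (X : R[X])
          = (C : R →+* R[X]).mapMatrix U * (C : R →+* R[X]).mapMatrix W * Matrix.scalar n X := by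
            rw [← hC, h1, _root_.map_one, one_mul]
        _ = (C : R →+* R[X]).mapMatrix U * Matrix.scalar n X * (C : R →+* R[X]).mapMatrix W := by
            rw [mul_assoc, mul_assoc,
              ((scalar_commute (X : R[X]) (fun r' => Commute.all _ _)
                ((C : R →+* R[X]).mapMatrix W)).eq)]
    · rw [← hC, ← hC]
  rw [Matrix.charpoly, Matrix.charpoly, key, det_mul, det_mul]
  rw [mul_comm ((C : R →+* R[X]).mapMatrix U).det _, mul_assoc, ← det_mul, ← hC, h1, _root_.map_one,
    det_one, mul_one]

lemma charpoly_diag (v : n → R) : (diagonal v).charpoly = ∏ i, (X - C (v i)) := by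
  have : charmatrix (diagonal v) = diagonal (fun i => (X : R[X]) - C (v i)) := by
    ext i j
    by_cases h : i = j
    · subst h; simp
    · simp [charmatrix_apply_ne _ _ _ h, diagonal_apply_ne _ h]
  rw [Matrix.charpoly, this, det_diagonal]

lemma roots_charpoly_hermitian {d : ℕ} (A : Matrix (Fin d) (Fin d) ℂ) (hA : A.IsHermitian) :
    A.charpoly.roots = Finset.univ.val.map (fun i => ((hA.eigenvalues i : ℝ) : ℂ)) := by
  have hsp := hA.spectral_theorem
  set V : Matrix (Fin d) (Fin d) ℂ := (hA.eigenvectorUnitary : Matrix (Fin d) (Fin d) ℂ) with hV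
  have h1 : V * star V = 1 := Matrix.mem_unitaryGroup_iff.mp hA.eigenvectorUnitary.2
  have h2 : star V * V = 1 := Matrix.mem_unitaryGroup_iff'.mp hA.eigenvectorUnitary.2
  have : A.charpoly = (diagonal (RCLike.ofReal ∘ hA.eigenvalues)).charpoly := by
    conv_lhs => rw [hsp]
    exact charpoly_conj_unit _ _ _ h1 h2
  rw [this, charpoly_diag]
  have : ∏ i : Fin d, (X - C ((RCLike.ofReal ∘ hA.eigenvalues) i)) =
      ((Finset.univ.val.map fun i => ((hA.eigenvalues i : ℝ) : ℂ)).map fun a => X - C a).prod := by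
    rw [Multiset.map_map]
    rfl
  rw [this, roots_multiset_prod_X_sub_C]

lemma spec_eq {d : ℕ} (A : Matrix (Fin d) (Fin d) ℂ) (hA : A.IsHermitian) :
    spectrum ℂ A = Set.range (fun i => (hA.eigenvalues i : ℂ)) := by
  conv_lhs => rw [hA.spectral_theorem]
  have e1 : (hA.eigenvectorUnitary : Matrix (Fin d) (Fin d) ℂ) =
      ((Unitary.toUnits hA.eigenvectorUnitary : (Matrix (Fin d) (Fin d) ℂ)ˣ) : Matrix (Fin d) (Fin d) ℂ) := rfl
  have e2 : star (hA.eigenvectorUnitary : Matrix (Fin d) (Fin d) ℂ) =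
      (((Unitary.toUnits hA.eigenvectorUnitary)⁻¹ : (Matrix (Fin d) (Fin d) ℂ)ˣ) : Matrix (Fin d) (Fin d) ℂ) := rfl
  rw [Unitary.conjStarAlgAut_apply, e2, e1, spectrum.units_conjugate, spectrum_diagonal]
  ext z
  simp [Function.comp]

lemma eig_pos {d : ℕ} (g : (Matrix (Fin d) (Fin d) ℂ)ˣ)
    (hB : (g.valᴴ * g.val).IsHermitian) (i : Fin d) : 0 < hB.eigenvalues i := by
  rcases lt_or_eq_of_le (Matrix.eigenvalues_conjTranspose_mul_self_nonneg g.val (i := i)) with h | h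
  · exact h
  exfalso
  have hdet : (g.valᴴ * g.val).det ≠ 0 := by
    have : IsUnit (g.valᴴ * g.val) := by
      have := (star g * g).isUnit
      simpa [Units.coe_star, Matrix.star_eq_conjTranspose] using this
    exact (Matrix.isUnit_iff_isUnit_det _ |>.mp this).ne_zero
  rw [hB.det_eq_prod_eigenvalues] at hdet
  exact hdet (Finset.prod_eq_zero (Finset.mem_univ i) (by rw [← h]; simp))

lemma norm_clm_sq_eq {d : ℕ} [NeZero d] (g : (Matrix (Fin d) (Fin d) ℂ)ˣ)
    (hB : (g.valᴴ * g.val).IsHermitian) (i₀ : Fin d)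
    (hmax : ∀ i, hB.eigenvalues i ≤ hB.eigenvalues i₀) :
    ‖toEuclideanCLM (𝕜 := ℂ) g.val‖ ^ 2 = hB.eigenvalues i₀ := by
  have hpos := eig_pos g hB
  set T := toEuclideanCLM (𝕜 := ℂ) g.val with hT
  have hTB : toEuclideanCLM (𝕜 := ℂ) (g.valᴴ * g.val) = star T * T := by
    rw [_root_.map_mul]
    congr 1
    rw [← Matrix.star_eq_conjTranspose, map_star]
  have hspec : spectrum ℂ (star T * T) = Set.range (fun i => (hB.eigenvalues i : ℂ)) := by
    rw [← hTB, AlgEquiv.spectrum_eq, spec_eq _ hB]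
  have hsa : IsSelfAdjoint (star T * T) := IsSelfAdjoint.star_mul_self T
  have h1 : (hB.eigenvalues i₀ : ℝ) ≤ ‖star T * T‖ := by
    have hmem : ((hB.eigenvalues i₀ : ℝ) : ℂ) ∈ spectrum ℂ (star T * T) := hspec ▸ ⟨i₀, rfl⟩
    have := spectrum.norm_le_norm_of_mem hmem
    rw [Complex.norm_real, Real.norm_eq_abs, abs_of_pos (hpos i₀)] at this
    exact this
  have h2 : ‖star T * T‖ ≤ (hB.eigenvalues i₀ : ℝ) := by
    have hrad := hsa.spectralRadius_eq_nnnorm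
    have hle : spectralRadius ℂ (star T * T) ≤ (‖((hB.eigenvalues i₀ : ℝ) : ℂ)‖₊ : ENNReal) := by
      rw [spectralRadius]
      apply iSup₂_le
      intro k hk
      rw [hspec] at hk
      obtain ⟨i, rfl⟩ := hk
      simp only [ENNReal.coe_le_coe, ← NNReal.coe_le_coe, coe_nnnorm, Complex.norm_real,
        Real.norm_eq_abs, abs_of_pos (hpos i), abs_of_pos (hpos i₀)]
      exact hmax i
    rw [hrad, ENNReal.coe_le_coe, ← NNReal.coe_le_coe, coe_nnnorm, coe_nnnorm,
      Complex.norm_real, Real.norm_eq_abs, abs_of_pos (hpos i₀)] at hle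
    exact hle
  have := le_antisymm h2 h1
  rw [← this, sq, ← CStarRing.norm_star_mul_self]


lemma lambdaVec_mem {d : ℕ} (A : Matrix (Fin d) (Fin d) ℂ) (f : Fin d → ℝ)
    (h : A.charpoly.roots.map (fun z => Real.log ‖z‖) = Finset.univ.val.map f)
    (j : Fin d) : ∃ i, lambdaVec A j = f i := by
  set s := A.charpoly.roots.map (fun z => Real.log ‖z‖) with hs
  set l0 := s.sort (· ≤ ·) with hl0
  have hlen : l0.length = d := by
    rw [hl0, Multiset.length_sort, h, Multiset.card_map]
    simp
  have hjlt : (j : ℕ) < l0.reverse.length := by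
    rw [List.length_reverse, hlen]; exact j.isLt
  have : lambdaVec A j = l0.reverse[(j : ℕ)] := List.getD_eq_getElem _ _ hjlt
  rw [this]
  have hmem : l0.reverse[(j : ℕ)] ∈ s := by
    rw [← Multiset.mem_sort (· ≤ ·), ← hl0, ← List.mem_reverse]
    exact List.getElem_mem _
  rw [h] at hmem
  obtain ⟨i, _, hi⟩ := Multiset.mem_map.mp hmem
  exact ⟨i, hi.symm⟩

lemma lambdaVec_zero_eq_max {d : ℕ} [NeZero d] (A : Matrix (Fin d) (Fin d) ℂ) (f : Fin d → ℝ)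
    (h : A.charpoly.roots.map (fun z => Real.log ‖z‖) = Finset.univ.val.map f)
    (i₀ : Fin d) (hmax : ∀ i, f i ≤ f i₀) : lambdaVec A (0 : Fin d) = f i₀ := by
  obtain ⟨i, hi⟩ := lambdaVec_mem A f h 0
  refine le_antisymm (hi ▸ hmax i) ?_
  set s := A.charpoly.roots.map (fun z => Real.log ‖z‖) with hs
  set l0 := s.sort (· ≤ ·) with hl0
  have hlen : l0.length = d := by
    rw [hl0, Multiset.length_sort, h, Multiset.card_map]; simp
  have hd : 0 < d := Nat.pos_of_ne_zero (NeZero.ne d)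
  have h0lt : ((0 : Fin d) : ℕ) < l0.reverse.length := by
    rw [List.length_reverse, hlen]; simpa using hd
  have hval : lambdaVec A (0 : Fin d) = l0.reverse[(0:ℕ)] := List.getD_eq_getElem _ _ h0lt
  have hrev : l0.reverse[(0:ℕ)]'(h0lt) = l0[l0.length - 1 - 0]'(by omega) := by
    exact List.getElem_reverse _
  have hf : f i₀ ∈ l0 := by
    rw [hl0, Multiset.mem_sort, h]
    exact Multiset.mem_map_of_mem f (Finset.mem_univ_val i₀)
  obtain ⟨k, hk, hkv⟩ := List.getElem_of_mem hf
  have hsorted : l0.Pairwise (· ≤ ·) := Multiset.pairwise_sort _ _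
  have : l0[k] ≤ l0[l0.length - 1 - 0] := by
    rcases eq_or_lt_of_le (by omega : k ≤ l0.length - 1 - 0) with he | hlt
    · exact le_of_eq (by congr 1)
    · have := hsorted.rel_get_of_lt (a := ⟨k, hk⟩) (b := ⟨l0.length - 1 - 0, by omega⟩)
        (by simpa [Fin.lt_def] using hlt)
      simpa [List.get_eq_getElem] using this
  rw [hval, hrev, ← hkv]
  exact this

lemma roots_log_eq {d : ℕ} (g : (Matrix (Fin d) (Fin d) ℂ)ˣ)
    (hB : (g.valᴴ * g.val).IsHermitian) :
    (g.valᴴ * g.val).charpoly.roots.map (fun z => Real.log ‖z‖) =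
      Finset.univ.val.map (fun i => Real.log (hB.eigenvalues i)) := by
  rw [roots_charpoly_hermitian _ hB, Multiset.map_map]
  congr 1
  ext i
  simp [Function.comp, Complex.norm_real, Real.log_abs]

lemma firstCoord_kappaE {d : ℕ} [NeZero d] (g : (Matrix (Fin d) (Fin d) ℂ)ˣ) :
    firstCoord (kappaE g.val) = Real.log (opNormC g.val) := by
  have hB : (g.valᴴ * g.val).IsHermitian :=
    (Matrix.posSemidef_conjTranspose_mul_self g.val).1
  have hpos := eig_pos g hB
  obtain ⟨i₀, hmax⟩ := Finite.exists_max hB.eigenvalues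
  have hlmax : ∀ i, Real.log (hB.eigenvalues i) ≤ Real.log (hB.eigenvalues i₀) :=
    fun i => Real.log_le_log (hpos i) (hmax i)
  have h0 : lambdaVec (g.valᴴ * g.val) (0 : Fin d) = Real.log (hB.eigenvalues i₀) :=
    lambdaVec_zero_eq_max _ _ (roots_log_eq g hB) i₀ hlmax
  have hnorm : ‖toEuclideanCLM (𝕜 := ℂ) g.val‖ ^ 2 = hB.eigenvalues i₀ :=
    norm_clm_sq_eq g hB i₀ hmax
  have hTpos : 0 < ‖toEuclideanCLM (𝕜 := ℂ) g.val‖ := by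
    rcases (norm_nonneg (toEuclideanCLM (𝕜 := ℂ) g.val)).lt_or_eq with h | h
    · exact h
    · exfalso
      have := hnorm
      rw [← h] at this
      simpa [← this] using hpos i₀
  have : Real.log (hB.eigenvalues i₀) = 2 * Real.log (opNormC g.val) := by
    rw [← hnorm, Real.log_pow, opNormC]
    push_cast
    ring
  show (1 / 2 : ℝ) * lambdaVec (g.valᴴ * g.val) (0 : Fin d) = _
  rw [h0, this]
  ring

lemma mem_spec_matrix {d : ℕ} (g : (Matrix (Fin d) (Fin d) ℂ)ˣ)
    (hB : (g.valᴴ * g.val).IsHermitian) (i : Fin d) :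
    ((hB.eigenvalues i : ℝ) : ℂ) ∈ spectrum ℂ (g.valᴴ * g.val) := by
  rw [spec_eq _ hB]; exact ⟨i, rfl⟩

lemma kappaE_norm_bound {d : ℕ} [NeZero d] (g : (Matrix (Fin d) (Fin d) ℂ)ˣ) (C : ℝ)
    (hC : 1 ≤ C)
    (h1 : ‖toEuclideanCLM (𝕜 := ℂ) (g.valᴴ * g.val)‖ ≤ C)
    (h2 : ‖toEuclideanCLM (𝕜 := ℂ) ((g⁻¹).val * (g⁻¹).valᴴ)‖ ≤ C) :
    ‖kappaE g.val‖ ≤ Real.sqrt d * Real.log C := by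
  have hB : (g.valᴴ * g.val).IsHermitian :=
    (Matrix.posSemidef_conjTranspose_mul_self g.val).1
  have hpos := eig_pos g hB
  have hup : ∀ i, hB.eigenvalues i ≤ C := by
    intro i
    have hmem : ((hB.eigenvalues i : ℝ) : ℂ) ∈
        spectrum ℂ (toEuclideanCLM (𝕜 := ℂ) (g.valᴴ * g.val)) := by
      rw [AlgEquiv.spectrum_eq]
      exact mem_spec_matrix g hB i
    have := spectrum.norm_le_norm_of_mem hmem
    rw [Complex.norm_real, Real.norm_eq_abs, abs_of_pos (hpos i)] at this
    exact this.trans h1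
  have hlow : ∀ i, (hB.eigenvalues i)⁻¹ ≤ C := by
    intro i
    set bu : (Matrix (Fin d) (Fin d) ℂ)ˣ := star g * g with hbu
    have hbuval : (bu : Matrix (Fin d) (Fin d) ℂ) = g.valᴴ * g.val := by
      simp [hbu, Units.coe_star, Matrix.star_eq_conjTranspose]
    have hbi : bu⁻¹ = g⁻¹ * star g⁻¹ := by
      rw [hbu, _root_.mul_inv_rev, star_inv]
    have hbuinv : ((bu⁻¹ : (Matrix (Fin d) (Fin d) ℂ)ˣ) : Matrix (Fin d) (Fin d) ℂ) =
        (g⁻¹).val * (g⁻¹).valᴴ := by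
      rw [hbi]
      simp [Units.coe_star, Matrix.star_eq_conjTranspose]
    have hr : (Units.mk0 ((hB.eigenvalues i : ℝ) : ℂ)
        (by simpa using (hpos i).ne') : ℂ) ∈ spectrum ℂ ((bu : Matrix (Fin d) (Fin d) ℂ)) := by
      rw [hbuval]; exact mem_spec_matrix g hB i
    have hinvmem := spectrum.inv_mem_iff.mp hr
    have hmem2 : (((hB.eigenvalues i : ℝ) : ℂ))⁻¹ ∈
        spectrum ℂ (toEuclideanCLM (𝕜 := ℂ) ((g⁻¹).val * (g⁻¹).valᴴ)) := by
      rw [AlgEquiv.spectrum_eq, ← hbuinv]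
      simpa using hinvmem
    have := spectrum.norm_le_norm_of_mem hmem2
    rw [norm_inv, Complex.norm_real, Real.norm_eq_abs, abs_of_pos (hpos i)] at this
    exact this.trans h2
  have hlogC : 0 ≤ Real.log C := Real.log_nonneg hC
  have hcoord : ∀ j : Fin d, |(1 / 2 : ℝ) * lambdaVec (g.valᴴ * g.val) j| ≤
      (1 / 2 : ℝ) * Real.log C := by
    intro j
    obtain ⟨i, hi⟩ := lambdaVec_mem _ _ (roots_log_eq g hB) j
    rw [hi, abs_mul, abs_of_pos (by norm_num : (0:ℝ) < 1/2)]
    have h1' : Real.log (hB.eigenvalues i) ≤ Real.log C :=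
      Real.log_le_log (hpos i) (hup i)
    have h2' : -Real.log (hB.eigenvalues i) ≤ Real.log C := by
      rw [← Real.log_inv]
      exact Real.log_le_log (inv_pos.mpr (hpos i)) (hlow i)
    have h3' : |Real.log (hB.eigenvalues i)| ≤ Real.log C := abs_le.mpr ⟨by linarith, h1'⟩
    linarith
  set K : ℝ := (1 / 2 : ℝ) * Real.log C with hKdef
  have hK : (0:ℝ) ≤ K := by positivity
  have hnorm : ‖kappaE g.val‖ ≤ Real.sqrt d * K := by
    rw [kappaE, EuclideanSpace.norm_eq]
    have hb : ∀ j : Fin d,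
        ‖((WithLp.equiv 2 (Fin d → ℝ)).symm
          (fun i => (1 / 2 : ℝ) * lambdaVec (g.valᴴ * g.val) i)) j‖ ^ 2 ≤ K ^ 2 := by
      intro j
      have hcv : ((WithLp.equiv 2 (Fin d → ℝ)).symm
          (fun i => (1 / 2 : ℝ) * lambdaVec (g.valᴴ * g.val) i)) j
          = (1 / 2 : ℝ) * lambdaVec (g.valᴴ * g.val) j := rfl
      rw [hcv, Real.norm_eq_abs]
      exact pow_le_pow_left₀ (abs_nonneg _) (hcoord j) 2
    calc Real.sqrt (∑ j, ‖((WithLp.equiv 2 (Fin d → ℝ)).symm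
            (fun i => (1 / 2 : ℝ) * lambdaVec (g.valᴴ * g.val) i)) j‖ ^ 2)
        ≤ Real.sqrt (∑ _j : Fin d, K ^ 2) :=
          Real.sqrt_le_sqrt (Finset.sum_le_sum (fun j _ => hb j))
      _ = Real.sqrt ((d : ℝ) * K ^ 2) := by
          rw [Finset.sum_const, Finset.card_univ]
          simp [nsmul_eq_mul]
      _ = Real.sqrt d * K := by
          rw [Real.sqrt_mul (by positivity), Real.sqrt_sq hK]
  calc ‖kappaE g.val‖ ≤ Real.sqrt d * K := hnorm
    _ ≤ Real.sqrt d * Real.log C := by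
        rw [hKdef]
        nlinarith [Real.sqrt_nonneg (d:ℝ)]

lemma opNormC_pos {d : ℕ} [NeZero d] (g : (Matrix (Fin d) (Fin d) ℂ)ˣ) :
    0 < opNormC g.val := by
  have hB : (g.valᴴ * g.val).IsHermitian :=
    (Matrix.posSemidef_conjTranspose_mul_self g.val).1
  obtain ⟨i₀, hmax⟩ := Finite.exists_max hB.eigenvalues
  have hnorm := norm_clm_sq_eq g hB i₀ hmax
  have hpos := eig_pos g hB i₀
  rcases (norm_nonneg (toEuclideanCLM (𝕜 := ℂ) g.val)).lt_or_eq with h | h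
  · exact h
  · exfalso
    rw [← h] at hnorm
    simp at hnorm
    rw [← hnorm] at hpos
    simp at hpos

lemma continuous_toEuclideanCLM {d : ℕ} :
    Continuous (fun A : Matrix (Fin d) (Fin d) ℂ => toEuclideanCLM (𝕜 := ℂ) A) := by
  let f : Matrix (Fin d) (Fin d) ℂ →ₗ[ℂ]
      (EuclideanSpace ℂ (Fin d) →L[ℂ] EuclideanSpace ℂ (Fin d)) :=
    { toFun := fun A => toEuclideanCLM (𝕜 := ℂ) A
      map_add' := fun A B => map_add _ A B
      map_smul' := fun c A => map_smul _ c A }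
  exact f.continuous_of_finiteDimensional

lemma continuous_opNormC {d : ℕ} :
    Continuous (fun g : (Matrix (Fin d) (Fin d) ℂ)ˣ => opNormC g.val) :=
  continuous_norm.comp (continuous_toEuclideanCLM.comp Units.continuous_val)

lemma abs_coord_le_norm {d : ℕ} (z : EuclideanSpace ℝ (Fin d)) (j : Fin d) :
    |(WithLp.equiv 2 (Fin d → ℝ)) z j| ≤ ‖z‖ := by
  rw [EuclideanSpace.norm_eq]
  have h1 : |(WithLp.equiv 2 (Fin d → ℝ)) z j| = Real.sqrt (‖z j‖ ^ 2) := by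
    rw [Real.sqrt_sq_eq_abs, Real.norm_eq_abs, abs_abs]
    rfl
  rw [h1]
  apply Real.sqrt_le_sqrt
  exact Finset.single_le_sum (f := fun i => ‖z i‖ ^ 2) (fun i _ => by positivity)
    (Finset.mem_univ j)

lemma firstCoord_lip {d : ℕ} [NeZero d] (x y : EuclideanSpace ℝ (Fin d)) :
    |firstCoord x - firstCoord y| ≤ dist x y := by
  have : firstCoord x - firstCoord y = (WithLp.equiv 2 (Fin d → ℝ)) (x - y) 0 := rfl
  rw [this, dist_eq_norm]
  exact abs_coord_le_norm (x - y) 0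

lemma continuous_firstCoord {d : ℕ} [NeZero d] :
    Continuous (firstCoord (d := d)) :=
  (continuous_apply (0 : Fin d)).comp (PiLp.continuous_ofLp 2 (fun _ : Fin d => ℝ))

section Hausdorff

variable {E : Type*} [MetricSpace E]

lemma sSup_image_le_of_hausdorff {A B : Set E} (f : E → ℝ)
    (hf : ∀ x y, |f x - f y| ≤ dist x y)
    (hAne : A.Nonempty) (hBne : B.Nonempty) (hfin : EMetric.hausdorffEdist A B ≠ ⊤)
    (hbddB : BddAbove (f '' B)) :
    sSup (f '' A) ≤ sSup (f '' B) + Metric.hausdorffDist A B := by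
  apply csSup_le (hAne.image f)
  rintro _ ⟨a, ha, rfl⟩
  apply le_of_forall_pos_le_add
  intro ε hε
  obtain ⟨b, hb, hdist⟩ := Metric.exists_dist_lt_of_hausdorffDist_lt ha
    (lt_add_of_pos_right _ hε) hfin
  have h1 : f a ≤ f b + dist a b := by
    have := hf a b
    rw [abs_le] at this
    linarith [this.2]
  have h2 : f b ≤ sSup (f '' B) := le_csSup hbddB ⟨b, hb, rfl⟩
  linarith

lemma abs_sSup_image_sub_le_of_hausdorff {A B : Set E} (f : E → ℝ)
    (hf : ∀ x y, |f x - f y| ≤ dist x y)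
    (hAne : A.Nonempty) (hBne : B.Nonempty) (hfin : EMetric.hausdorffEdist A B ≠ ⊤)
    (hbddA : BddAbove (f '' A)) (hbddB : BddAbove (f '' B)) :
    |sSup (f '' A) - sSup (f '' B)| ≤ Metric.hausdorffDist A B := by
  rw [abs_le]
  constructor
  · have := sSup_image_le_of_hausdorff f hf hBne hAne
      (by simpa only [EMetric.hausdorffEdist, Metric.hausdorffEDist_comm] using hfin) hbddA
    rw [Metric.hausdorffDist_comm] at this
    linarith
  · have := sSup_image_le_of_hausdorff f hf hAne hBne hfin hbddB
    linarith

lemma sInf_image_le_of_hausdorff {A B : Set E} (f : E → ℝ)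
    (hf : ∀ x y, |f x - f y| ≤ dist x y)
    (hAne : A.Nonempty) (hBne : B.Nonempty) (hfin : EMetric.hausdorffEdist A B ≠ ⊤)
    (hbddB : BddBelow (f '' B)) :
    sInf (f '' B) - Metric.hausdorffDist A B ≤ sInf (f '' A) := by
  apply le_csInf (hAne.image f)
  rintro _ ⟨a, ha, rfl⟩
  rw [sub_le_iff_le_add]
  apply le_of_forall_pos_le_add
  intro ε hε
  obtain ⟨b, hb, hdist⟩ := Metric.exists_dist_lt_of_hausdorffDist_lt ha
    (lt_add_of_pos_right _ hε) hfin
  have h1 : f b ≤ f a + dist a b := by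
    have := hf b a
    rw [abs_le, dist_comm b a] at this
    linarith [this.2]
  have h2 : sInf (f '' B) ≤ f b := csInf_le hbddB ⟨b, hb, rfl⟩
  linarith

lemma abs_sInf_image_sub_le_of_hausdorff {A B : Set E} (f : E → ℝ)
    (hf : ∀ x y, |f x - f y| ≤ dist x y)
    (hAne : A.Nonempty) (hBne : B.Nonempty) (hfin : EMetric.hausdorffEdist A B ≠ ⊤)
    (hbddA : BddBelow (f '' A)) (hbddB : BddBelow (f '' B)) :
    |sInf (f '' A) - sInf (f '' B)| ≤ Metric.hausdorffDist A B := by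
  rw [abs_le]
  constructor
  · have := sInf_image_le_of_hausdorff f hf hAne hBne hfin hbddB
    linarith
  · have := sInf_image_le_of_hausdorff f hf hBne hAne
      (by simpa only [EMetric.hausdorffEdist, Metric.hausdorffEDist_comm] using hfin) hbddA
    rw [Metric.hausdorffDist_comm] at this
    linarith

end Hausdorff

section Aux

variable {d : ℕ} [NeZero d]

abbrev MxU (d : ℕ) := (Matrix (Fin d) (Fin d) ℂ)ˣ

lemma compact_pow {S : Set (MxU d)} (hS : IsCompact S) (n : ℕ) : IsCompact (S ^ n) := by
  induction n with
  | zero =>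
      rw [pow_zero]
      have : (1 : Set (MxU d)) = {1} := rfl
      rw [this]
      exact isCompact_singleton
  | succ k ih => rw [pow_succ]; exact ih.mul hS

lemma setK_eq (S : Set (MxU d)) (n : ℕ) :
    {x : ℝ | ∃ g ∈ S ^ n, x = opNormC g.val ^ ((n : ℝ)⁻¹)} =
      (fun g : MxU d => opNormC g.val ^ ((n : ℝ)⁻¹)) '' (S ^ n) := by
  ext x
  constructor
  · rintro ⟨g, hg, rfl⟩; exact ⟨g, hg, rfl⟩
  · rintro ⟨g, hg, rfl⟩; exact ⟨g, hg, rfl⟩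

lemma setK_compact {S : Set (MxU d)} (hS : IsCompact S) {n : ℕ} (hn : 1 ≤ n) :
    IsCompact ((fun g : MxU d => opNormC g.val ^ ((n : ℝ)⁻¹)) '' (S ^ n)) := by
  apply (compact_pow hS n).image
  exact continuous_opNormC.rpow_const (fun x => Or.inr (by positivity))

lemma image_firstCoord_eq (S : Set (MxU d)) (n : ℕ) :
    firstCoord '' ((fun g : MxU d => (n : ℝ)⁻¹ • kappaE g.val) '' (S ^ n)) =
      Real.log '' ((fun g : MxU d => opNormC g.val ^ ((n : ℝ)⁻¹)) '' (S ^ n)) := by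
  rw [Set.image_image, Set.image_image]
  apply Set.image_congr
  intro g _
  have h1 : firstCoord ((n : ℝ)⁻¹ • kappaE g.val) = (n : ℝ)⁻¹ * firstCoord (kappaE g.val) := rfl
  rw [h1, firstCoord_kappaE g, Real.log_rpow (opNormC_pos g)]

lemma log_sSup_of_compact {Ks : Set ℝ} (hc : IsCompact Ks) (hne : Ks.Nonempty)
    (hpos : ∀ x ∈ Ks, 0 < x) :
    Real.log (sSup Ks) = sSup (Real.log '' Ks) ∧
      Real.log (sInf Ks) = sInf (Real.log '' Ks) := by
  constructor
  · have hmem := hc.sSup_mem hne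
    refine (IsGreatest.csSup_eq ⟨Set.mem_image_of_mem _ hmem, ?_⟩).symm
    rintro _ ⟨y, hy, rfl⟩
    exact Real.log_le_log (hpos y hy) (le_csSup hc.bddAbove hy)
  · have hmem := hc.sInf_mem hne
    refine (IsLeast.csInf_eq ⟨Set.mem_image_of_mem _ hmem, ?_⟩).symm
    rintro _ ⟨y, hy, rfl⟩
    exact Real.log_le_log (hpos (sInf Ks) hmem) (csInf_le hc.bddBelow hy)

lemma phi_bounded {S : Set (MxU d)} (hS : IsCompact S) (hSne : S.Nonempty) (n : ℕ) :
    Bornology.IsBounded ((fun g : MxU d => (n : ℝ)⁻¹ • kappaE g.val) '' (S ^ n)) := by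
  have hcomp := compact_pow hS n
  have hne : (S ^ n).Nonempty := hSne.pow
  have hF1 : Continuous (fun g : MxU d => ‖toEuclideanCLM (𝕜 := ℂ) (g.valᴴ * g.val)‖) := by
    apply continuous_norm.comp
    apply continuous_toEuclideanCLM.comp
    have hval : Continuous (fun g : MxU d => g.val) := Units.continuous_val
    have hct : Continuous (fun g : MxU d => g.valᴴ) := by
      simp only [← Matrix.star_eq_conjTranspose]
      exact continuous_star.comp hval
    exact hct.mul hval
  have hF2 : Continuous (fun g : MxU d => ‖toEuclideanCLM (𝕜 := ℂ) ((g⁻¹).val * (g⁻¹).valᴴ)‖) := by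
    apply continuous_norm.comp
    apply continuous_toEuclideanCLM.comp
    have hval : Continuous (fun g : MxU d => (g⁻¹).val) := Units.continuous_coe_inv
    have hct : Continuous (fun g : MxU d => (g⁻¹).valᴴ) := by
      simp only [← Matrix.star_eq_conjTranspose]
      exact continuous_star.comp hval
    exact hval.mul hct
  obtain ⟨x₁, _, hx₁⟩ := hcomp.exists_isMaxOn hne hF1.continuousOn
  obtain ⟨x₂, _, hx₂⟩ := hcomp.exists_isMaxOn hne hF2.continuousOn
  set C : ℝ := max (max (‖toEuclideanCLM (𝕜 := ℂ) (x₁.valᴴ * x₁.val)‖)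
    (‖toEuclideanCLM (𝕜 := ℂ) ((x₂⁻¹).val * (x₂⁻¹).valᴴ)‖)) 1 with hC
  have hC1 : 1 ≤ C := le_max_right _ _
  have hbound : ∀ g ∈ S ^ n, ‖kappaE g.val‖ ≤ Real.sqrt d * Real.log C := by
    intro g hg
    apply kappaE_norm_bound g C hC1
    · exact (hx₁ hg).trans (le_max_of_le_left (le_max_left _ _))
    · exact (hx₂ hg).trans (le_max_of_le_left (le_max_right _ _))
  apply Bornology.IsBounded.subset (Metric.isBounded_closedBall
    (x := (0 : EuclideanSpace ℝ (Fin d))) (r := Real.sqrt d * Real.log C))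
  rintro _ ⟨g, hg, rfl⟩
  rw [Metric.mem_closedBall, dist_zero_right, norm_smul]
  calc ‖(n : ℝ)⁻¹‖ * ‖kappaE g.val‖ ≤ 1 * ‖kappaE g.val‖ := by
        apply mul_le_mul_of_nonneg_right _ (norm_nonneg _)
        rw [Real.norm_eq_abs, abs_of_nonneg (by positivity)]
        rcases Nat.eq_zero_or_pos n with h | h
        · simp [h]
        · rw [inv_le_one_iff₀]
          right
          exact_mod_cast h
  _ = ‖kappaE g.val‖ := one_mul _
  _ ≤ Real.sqrt d * Real.log C := hbound g hg

lemma setK_pos (S : Set (MxU d)) (n : ℕ) :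
    ∀ x ∈ (fun g : MxU d => opNormC g.val ^ ((n : ℝ)⁻¹)) '' (S ^ n), 0 < x := by
  rintro _ ⟨g, _, rfl⟩
  exact Real.rpow_pos_of_pos (opNormC_pos g) _

end Aux

/-- For a compact `S ⊂ GL_d(ℂ)` whose normalized Cartan projections `κ(Sⁿ)/n` converge in the
Hausdorff metric to the joint spectrum `J(S)`, the joint spectral radius
`R(S) = lim_n sup_{g ∈ Sⁿ} ‖g‖^{1/n}` satisfies `log R(S) = max {x₁ : x ∈ J(S)}` and the lower
joint spectral radius satisfies `log R_sub(S) = min {x₁ : x ∈ J(S)}`. -/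
theorem jsr_from_joint_spectrum {d : ℕ} [NeZero d]
    (S : Set (Matrix (Fin d) (Fin d) ℂ)ˣ) (hS : IsCompact S) (hSne : S.Nonempty)
    (J : Set (EuclideanSpace ℝ (Fin d))) (hJc : IsCompact J) (hJne : J.Nonempty)
    (hJ : Filter.Tendsto (fun n : ℕ =>
        Metric.hausdorffDist ((fun g : (Matrix (Fin d) (Fin d) ℂ)ˣ =>
          (n : ℝ)⁻¹ • kappaE g.val) '' (S ^ n)) J)
      Filter.atTop (nhds 0))
    (R Rsub : ℝ)
    (hR : Filter.Tendsto (fun n : ℕ =>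
        sSup {x : ℝ | ∃ g ∈ S ^ n, x = opNormC g.val ^ ((n : ℝ)⁻¹)})
      Filter.atTop (nhds R))
    (hRsub : Filter.Tendsto (fun n : ℕ =>
        sInf {x : ℝ | ∃ g ∈ S ^ n, x = opNormC g.val ^ ((n : ℝ)⁻¹)})
      Filter.atTop (nhds Rsub)) :
    Real.log R = sSup (firstCoord '' J) ∧ Real.log Rsub = sInf (firstCoord '' J) := by
  set L : ℝ := sSup (firstCoord '' J) with hL
  set L' : ℝ := sInf (firstCoord '' J) with hL'
  have hJim : IsCompact (firstCoord '' J) := hJc.image continuous_firstCoord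
  have hJbdd : Bornology.IsBounded J := hJc.isBounded
  have key : ∀ n : ℕ, 1 ≤ n →
      |Real.log (sSup {x : ℝ | ∃ g ∈ S ^ n, x = opNormC g.val ^ ((n : ℝ)⁻¹)}) - L| ≤
          Metric.hausdorffDist ((fun g : (Matrix (Fin d) (Fin d) ℂ)ˣ =>
            (n : ℝ)⁻¹ • kappaE g.val) '' (S ^ n)) J ∧
        |Real.log (sInf {x : ℝ | ∃ g ∈ S ^ n, x = opNormC g.val ^ ((n : ℝ)⁻¹)}) - L'| ≤
          Metric.hausdorffDist ((fun g : (Matrix (Fin d) (Fin d) ℂ)ˣ =>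
            (n : ℝ)⁻¹ • kappaE g.val) '' (S ^ n)) J ∧
        0 < sSup {x : ℝ | ∃ g ∈ S ^ n, x = opNormC g.val ^ ((n : ℝ)⁻¹)} ∧
        0 < sInf {x : ℝ | ∃ g ∈ S ^ n, x = opNormC g.val ^ ((n : ℝ)⁻¹)} := by
    intro n hn
    have hKc : IsCompact ((fun g : MxU d => opNormC g.val ^ ((n : ℝ)⁻¹)) '' (S ^ n)) :=
      setK_compact hS hn
    have hKne : ((fun g : MxU d => opNormC g.val ^ ((n : ℝ)⁻¹)) '' (S ^ n)).Nonempty :=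
      (hSne.pow).image _
    have hKpos := setK_pos S n
    have hlog := log_sSup_of_compact hKc hKne hKpos
    have hPne : ((fun g : MxU d => (n : ℝ)⁻¹ • kappaE g.val) '' (S ^ n)).Nonempty :=
      (hSne.pow).image _
    have hPbdd := phi_bounded hS hSne n
    have hfc := image_firstCoord_eq S n
    have hlogc : IsCompact (Real.log ''
        ((fun g : MxU d => opNormC g.val ^ ((n : ℝ)⁻¹)) '' (S ^ n))) :=
      hKc.image_of_continuousOn
        (fun x hx => (Real.continuousAt_log (hKpos x hx).ne').continuousWithinAt)
    have hfin : EMetric.hausdorffEdist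
        ((fun g : MxU d => (n : ℝ)⁻¹ • kappaE g.val) '' (S ^ n)) J ≠ ⊤ :=
      Metric.hausdorffEdist_ne_top_of_nonempty_of_bounded hPne hJne hPbdd hJbdd
    refine ⟨?_, ?_, ?_, ?_⟩
    · rw [setK_eq S n, hlog.1, ← hfc]
      exact abs_sSup_image_sub_le_of_hausdorff firstCoord firstCoord_lip hPne hJne hfin
        (hfc ▸ hlogc.bddAbove) hJim.bddAbove
    · rw [setK_eq S n, hlog.2, ← hfc]
      exact abs_sInf_image_sub_le_of_hausdorff firstCoord firstCoord_lip hPne hJne hfin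
        (hfc ▸ hlogc.bddBelow) hJim.bddBelow
    · rw [setK_eq S n]; exact hKpos _ (hKc.sSup_mem hKne)
    · rw [setK_eq S n]; exact hKpos _ (hKc.sInf_mem hKne)
  constructor
  · have h1 : Filter.Tendsto (fun n : ℕ =>
        Real.log (sSup {x : ℝ | ∃ g ∈ S ^ n, x = opNormC g.val ^ ((n : ℝ)⁻¹)}) - L)
        Filter.atTop (nhds 0) := by
      apply squeeze_zero_norm' _ hJ
      refine Filter.eventually_atTop.mpr ⟨1, fun n hn => ?_⟩
      simpa [Real.norm_eq_abs] using (key n hn).1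
    rw [tendsto_sub_nhds_zero_iff] at h1
    have hexp : Filter.Tendsto (fun n : ℕ =>
        Real.exp (Real.log (sSup {x : ℝ | ∃ g ∈ S ^ n, x = opNormC g.val ^ ((n : ℝ)⁻¹)})))
        Filter.atTop (nhds (Real.exp L)) :=
      (Real.continuous_exp.continuousAt.tendsto).comp h1
    have heq : (fun n : ℕ =>
        Real.exp (Real.log (sSup {x : ℝ | ∃ g ∈ S ^ n, x = opNormC g.val ^ ((n : ℝ)⁻¹)})))
        =ᶠ[Filter.atTop] (fun n : ℕ =>
          sSup {x : ℝ | ∃ g ∈ S ^ n, x = opNormC g.val ^ ((n : ℝ)⁻¹)}) :=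
      Filter.eventually_atTop.mpr ⟨1, fun n hn => Real.exp_log (key n hn).2.2.1⟩
    have htends := hexp.congr' heq
    have hRL : R = Real.exp L := tendsto_nhds_unique hR htends
    rw [hRL, Real.log_exp]
  · have h1 : Filter.Tendsto (fun n : ℕ =>
        Real.log (sInf {x : ℝ | ∃ g ∈ S ^ n, x = opNormC g.val ^ ((n : ℝ)⁻¹)}) - L')
        Filter.atTop (nhds 0) := by
      apply squeeze_zero_norm' _ hJ
      refine Filter.eventually_atTop.mpr ⟨1, fun n hn => ?_⟩
      simpa [Real.norm_eq_abs] using (key n hn).2.1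
    rw [tendsto_sub_nhds_zero_iff] at h1
    have hexp : Filter.Tendsto (fun n : ℕ =>
        Real.exp (Real.log (sInf {x : ℝ | ∃ g ∈ S ^ n, x = opNormC g.val ^ ((n : ℝ)⁻¹)})))
        Filter.atTop (nhds (Real.exp L')) :=
      (Real.continuous_exp.continuousAt.tendsto).comp h1
    have heq : (fun n : ℕ =>
        Real.exp (Real.log (sInf {x : ℝ | ∃ g ∈ S ^ n, x = opNormC g.val ^ ((n : ℝ)⁻¹)})))
        =ᶠ[Filter.atTop] (fun n : ℕ =>
          sInf {x : ℝ | ∃ g ∈ S ^ n, x = opNormC g.val ^ ((n : ℝ)⁻¹)}) :=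
      Filter.eventually_atTop.mpr ⟨1, fun n hn => Real.exp_log (key n hn).2.2.2⟩
    have htends := hexp.congr' heq
    have hRL : Rsub = Real.exp L' := tendsto_nhds_unique hRsub htends
    rw [hRL, Real.log_exp]
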